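/- arXiv:2107.02595 — 3 statements merged into one kernel-verified Lean document; each statement's English description precedes it below -/
import Mathlib

section
/- Let W be a diagonal m×m matrix with positive diagonal entries and R ∈ ℝ^{(n−1)×m} with full row rank. Then (R^†)ᵀ W^{−1} R^† ⪰ (R W Rᵀ)^{−1}, where R^† = Rᵀ(RRᵀ)^{−1} is the Moore–Penrose pseudoinverse of R. -/
open Matrix

section aux

variable {k m : ℕ}

lemma aux_posdef (R : Matrix (Fin k) (Fin m) ℝ)
    (hR : ∀ x : Fin k → ℝ, R.vecMul x = 0 → x = 0)
    {W : Matrix (Fin m) (Fin m) ℝ} (hW : W.PosDef) :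
    (R * W * Rᵀ).PosDef := by
  refine PosDef.of_dotProduct_mulVec_pos ?_ ?_
  · have : Rᵀ = Rᴴ := by ext i j; simp [conjTranspose]
    rw [this]
    exact isHermitian_mul_mul_conjTranspose R hW.isHermitian
  · intro x hx
    have hu : R.vecMul x ≠ 0 := fun h => hx (hR x h)
    have := hW.dotProduct_mulVec_pos hu
    convert this using 1
    simp only [star_trivial, mulVec_mulVec] at *
    rw [← mulVec_transpose, Matrix.mul_assoc, mulVec_mulVec, ← mulVec_mulVec,
      dotProduct_mulVec, ← mulVec_transpose]

end aux

/-- For `W` diagonal positive and `R` of full row rank, with `R† = Rᵀ(RRᵀ)⁻¹`,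
`(R†)ᵀ W⁻¹ R† ⪰ (R W Rᵀ)⁻¹` in the Loewner order. -/
theorem stmt9 {n m : ℕ} (R : Matrix (Fin (n - 1)) (Fin m) ℝ)
    (hR : ∀ x : Fin (n - 1) → ℝ, R.vecMul x = 0 → x = 0)
    (w : Fin m → ℝ) (hw : ∀ i, 0 < w i) :
    let W : Matrix (Fin m) (Fin m) ℝ := Matrix.diagonal w
    let Rdag : Matrix (Fin m) (Fin (n - 1)) ℝ := Rᵀ * (R * Rᵀ)⁻¹
    (Rdagᵀ * W⁻¹ * Rdag - (R * W * Rᵀ)⁻¹).PosSemidef := by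
  intro W Rdag
  have hW : W.PosDef := Matrix.posDef_diagonal_iff.mpr hw
  have hWT : Wᵀ = W := Matrix.diagonal_transpose w
  have hRRT : (R * Rᵀ).PosDef := by
    have := aux_posdef R hR (Matrix.PosDef.one (n := Fin m) (R := ℝ))
    simpa using this
  have hRWR : (R * W * Rᵀ).PosDef := aux_posdef R hR hW
  have hRRTdet : IsUnit (R * Rᵀ).det := hRRT.isUnit.map detMonoidHom
  have hRWRdet : IsUnit (R * W * Rᵀ).det := hRWR.isUnit.map detMonoidHom
  have hWdet : IsUnit W.det := hW.isUnit.map detMonoidHom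
  set B := (R * W * Rᵀ)⁻¹ with hB
  have hBT : Bᵀ = B := by
    rw [hB, Matrix.transpose_nonsing_inv]
    congr 1
    rw [Matrix.transpose_mul, Matrix.transpose_mul, hWT, transpose_transpose,
      Matrix.mul_assoc]
  have hRRd : R * Rdag = 1 := by
    rw [show R * Rdag = (R * Rᵀ) * (R * Rᵀ)⁻¹ by rw [Matrix.mul_assoc],
      Matrix.mul_nonsing_inv _ hRRTdet]
  have hRdT : Rdagᵀ * Rᵀ = 1 := by
    have := congrArg Matrix.transpose hRRd
    rwa [Matrix.transpose_mul, Matrix.transpose_one] at this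
  set M := Rdag - W * Rᵀ * B with hM
  have key : Mᵀ * W⁻¹ * M = Rdagᵀ * W⁻¹ * Rdag - B := by
    have hWinv : W⁻¹ * W = 1 := Matrix.nonsing_inv_mul _ hWdet
    have hWinv' : W * W⁻¹ = 1 := Matrix.mul_nonsing_inv _ hWdet
    have hMT : Mᵀ = Rdagᵀ - B * R * W := by
      simp only [hM, Matrix.transpose_sub, Matrix.transpose_mul, hBT, hWT,
        transpose_transpose, Matrix.mul_assoc]
    rw [hMT, hM]
    simp only [Matrix.sub_mul, Matrix.mul_sub]
    have e1 : Rdagᵀ * W⁻¹ * (W * Rᵀ * B) = B := by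
      rw [show Rdagᵀ * W⁻¹ * (W * Rᵀ * B) = Rdagᵀ * (W⁻¹ * W) * (Rᵀ * B) by
        simp only [Matrix.mul_assoc], hWinv, Matrix.mul_one, ← Matrix.mul_assoc, hRdT,
        Matrix.one_mul]
    have e2 : B * R * W * W⁻¹ * Rdag = B := by
      rw [Matrix.mul_assoc (B * R), hWinv', Matrix.mul_one, Matrix.mul_assoc, hRRd,
        Matrix.mul_one]
    have e3 : B * R * W * W⁻¹ * (W * Rᵀ * B) = B := by
      rw [Matrix.mul_assoc (B * R), hWinv', Matrix.mul_one,
        show B * R * (W * Rᵀ * B) = B * (R * W * Rᵀ) * B by simp only [Matrix.mul_assoc],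
        hB, Matrix.nonsing_inv_mul _ hRWRdet, Matrix.one_mul]
    rw [e1, e2, e3]
    abel
  have hM' : (Mᵀ * W⁻¹ * M).PosSemidef := by
    have hWi : W⁻¹.PosSemidef := hW.inv.posSemidef
    have : Mᴴ = Mᵀ := by ext i j; simp [conjTranspose]
    simpa [this] using hWi.conjTranspose_mul_mul_same M
  rw [← key]
  exact hM'
end

section
/- Let W be diagonal with positive entries and R have full row rank. Then −RWRᵀ + RRᵀ(RW^{−1}Rᵀ)^{−1}RRᵀ ⪯ 0. -/
open Matrix

/-- For `W` diagonal positive and `R` of full row rank,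
`−RWRᵀ + RRᵀ(RW⁻¹Rᵀ)⁻¹RRᵀ ⪯ 0` (negative semidefinite). -/
theorem stmt11 {n m : ℕ} (R : Matrix (Fin (n - 1)) (Fin m) ℝ)
    (hR : ∀ x : Fin (n - 1) → ℝ, R.vecMul x = 0 → x = 0)
    (w : Fin m → ℝ) (hw : ∀ i, 0 < w i) :
    let W : Matrix (Fin m) (Fin m) ℝ := Matrix.diagonal w
    (-(-(R * W * Rᵀ) + R * Rᵀ * (R * W⁻¹ * Rᵀ)⁻¹ * (R * Rᵀ))).PosSemidef := by
  intro W
  have hw0 : ∀ i, w i ≠ 0 := fun i => (hw i).ne'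
  have hWinv : (W : Matrix (Fin m) (Fin m) ℝ)⁻¹ = Matrix.diagonal (fun i => (w i)⁻¹) := by
    apply Matrix.inv_eq_right_inv
    rw [show W = Matrix.diagonal w from rfl, Matrix.diagonal_mul_diagonal]
    have : (fun i => w i * (w i)⁻¹) = fun _ : Fin m => (1 : ℝ) :=
      funext fun i => mul_inv_cancel₀ (hw0 i)
    rw [this, Matrix.diagonal_one]
  set S : Matrix (Fin (n-1)) (Fin (n-1)) ℝ := R * W⁻¹ * Rᵀ with hSdef
  have hform : ∀ y : Fin (n-1) → ℝ,
      y ⬝ᵥ S *ᵥ y = ∑ i, (w i)⁻¹ * ((y ᵥ* R) i * (y ᵥ* R) i) := by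
    intro y
    rw [hSdef, hWinv, ← Matrix.mulVec_mulVec, ← Matrix.mulVec_mulVec,
      Matrix.dotProduct_mulVec, Matrix.mulVec_transpose]
    simp only [dotProduct, Matrix.mulVec_diagonal]
    exact Finset.sum_congr rfl fun i _ => by ring
  have hSposdef : S.PosDef := by
    rw [Matrix.posDef_iff_dotProduct_mulVec]
    constructor
    · rw [hSdef]
      have := Matrix.isHermitian_mul_mul_conjTranspose R
        (A := W⁻¹) (by rw [hWinv]; exact Matrix.isHermitian_diagonal _)
      simpa [Matrix.conjTranspose_eq_transpose_of_trivial] using this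
    · intro y hy
      have hyR : y ᵥ* R ≠ 0 := fun h => hy (hR y h)
      obtain ⟨i, hi⟩ := Function.ne_iff.mp hyR
      simp only [star_trivial]
      rw [hform]
      apply Finset.sum_pos'
        (fun j _ => mul_nonneg (le_of_lt (inv_pos.mpr (hw j))) (mul_self_nonneg _))
      exact ⟨i, Finset.mem_univ i,
        mul_pos (inv_pos.mpr (hw i)) (mul_self_pos.mpr hi)⟩
  have hSunit : IsUnit S.det := isUnit_iff_ne_zero.mpr hSposdef.det_pos.ne'
  have hSmulinv : S * S⁻¹ = 1 := Matrix.mul_nonsing_inv S hSunit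
  have hRRtsymm : (R * Rᵀ)ᵀ = R * Rᵀ := by
    rw [Matrix.transpose_mul, Matrix.transpose_transpose]
  have hSinvH : (S⁻¹).IsHermitian := hSposdef.isHermitian.inv
  rw [Matrix.posSemidef_iff_dotProduct_mulVec]
  constructor
  · have h1 : (R * W * Rᵀ).IsHermitian := by
      have := Matrix.isHermitian_mul_mul_conjTranspose R (A := W)
        (Matrix.isHermitian_diagonal w)
      simpa [Matrix.conjTranspose_eq_transpose_of_trivial] using this
    have h2 : (R * Rᵀ * S⁻¹ * (R * Rᵀ)).IsHermitian := by
      have := Matrix.isHermitian_mul_mul_conjTranspose (R * Rᵀ) (A := S⁻¹) hSinvH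
      rw [Matrix.conjTranspose_eq_transpose_of_trivial, hRRtsymm] at this
      exact this
    exact (h1.neg.add h2).neg
  · intro x
    simp only [star_trivial]
    set a : Fin m → ℝ := x ᵥ* R with ha
    set y : Fin (n-1) → ℝ := S⁻¹ *ᵥ ((R * Rᵀ) *ᵥ x) with hy
    set b : Fin m → ℝ := y ᵥ* R with hb
    have e1 : x ⬝ᵥ (R * W * Rᵀ) *ᵥ x = ∑ i, w i * (a i * a i) := by
      rw [show (W : Matrix (Fin m) (Fin m) ℝ) = Matrix.diagonal w from rfl,
        ← Matrix.mulVec_mulVec, ← Matrix.mulVec_mulVec,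
        Matrix.dotProduct_mulVec, Matrix.mulVec_transpose]
      simp only [dotProduct, Matrix.mulVec_diagonal]
      exact Finset.sum_congr rfl fun i _ => by ring
    have e2 : x ⬝ᵥ (R * Rᵀ * S⁻¹ * (R * Rᵀ)) *ᵥ x = ∑ i, a i * b i := by
      have h : (R * Rᵀ * S⁻¹ * (R * Rᵀ)) *ᵥ x = R *ᵥ (Rᵀ *ᵥ y) := by
        rw [hy]
        simp only [Matrix.mulVec_mulVec, Matrix.mul_assoc]
      rw [h, Matrix.dotProduct_mulVec, Matrix.mulVec_transpose]
      rfl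
    have e3 : ∑ i, a i * b i = ∑ i, (w i)⁻¹ * (b i * b i) := by
      have hSy : S *ᵥ y = (R * Rᵀ) *ᵥ x := by
        rw [hy, Matrix.mulVec_mulVec, hSmulinv, Matrix.one_mulVec]
      have l1 : y ⬝ᵥ S *ᵥ y = y ⬝ᵥ (R * Rᵀ) *ᵥ x := by rw [hSy]
      have l2 : y ⬝ᵥ (R * Rᵀ) *ᵥ x = ∑ i, a i * b i := by
        rw [← Matrix.mulVec_mulVec, Matrix.dotProduct_mulVec, Matrix.mulVec_transpose]
        simp only [dotProduct]
        exact Finset.sum_congr rfl fun i _ => mul_comm _ _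
      rw [← l2, ← l1, hform y]
    have key : ∀ i, 0 ≤ w i * (a i * a i) - 2 * (a i * b i) + (w i)⁻¹ * (b i * b i) := by
      intro i
      have hwi := hw i
      have h : (w i * a i - b i)^2 / w i
          = w i * (a i * a i) - 2 * (a i * b i) + (w i)⁻¹ * (b i * b i) := by
        field_simp
        ring
      rw [← h]
      positivity
    have hsum : 0 ≤ ∑ i, (w i * (a i * a i) - 2 * (a i * b i) + (w i)⁻¹ * (b i * b i)) :=
      Finset.sum_nonneg fun i _ => key i
    rw [Finset.sum_add_distrib, Finset.sum_sub_distrib, ← Finset.mul_sum] at hsum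
    have goal_eq : (-(-(R * W * Rᵀ) + R * Rᵀ * S⁻¹ * (R * Rᵀ))) *ᵥ x
        = (R * W * Rᵀ) *ᵥ x - (R * Rᵀ * S⁻¹ * (R * Rᵀ)) *ᵥ x := by
      rw [Matrix.neg_mulVec, Matrix.add_mulVec, Matrix.neg_mulVec]
      module
    rw [goal_eq, dotProduct_sub, e1, e2]
    linarith [e3, hsum]
end

section
/- Let L be positive definite of size (n−1), R ∈ ℝ^{(n−1)×m} with full row rank, and W diagonal positive definite of size m. Set X = W^{1/2}Rᵀ(RWRᵀ L RWRᵀ)^{−1}RW^{1/2} and X₁ = W^{−1/2}R^† L^{−1} (R^†)ᵀ W^{−1/2} with R^† = Rᵀ(RRᵀ)^{−1}. Then λ_max(X₁) ≥ λ_max(X). -/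
open Matrix

noncomputable def maxEig {n : Type*} [Fintype n] [DecidableEq n] (A : Matrix n n ℝ) : ℝ :=
  sSup (spectrum ℝ A)

section Stmt18Helpers
set_option linter.unusedSectionVars false
variable {k l : Type*} [Fintype k] [DecidableEq k] [Fintype l] [DecidableEq l]

lemma eig_le_maxEig {M : Matrix k k ℝ} (hM : M.IsHermitian) {μ : ℝ}
    (hμ : μ ∈ spectrum ℝ M) : μ ≤ maxEig M :=
  le_csSup (by rw [hM.spectrum_real_eq_range_eigenvalues]; exact (Set.finite_range _).bddAbove) hμ

lemma mem_spectrum_of_eigvec {M : Matrix k k ℝ} {μ : ℝ} {v : k → ℝ} (hv : v ≠ 0)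
    (h : M *ᵥ v = μ • v) : μ ∈ spectrum ℝ M := by
  rw [spectrum.mem_iff]
  intro hu
  rw [Matrix.isUnit_iff_isUnit_det] at hu
  have h0 : (algebraMap ℝ (Matrix k k ℝ) μ - M) *ᵥ v = 0 := by
    rw [Algebra.algebraMap_eq_smul_one, sub_mulVec, smul_mulVec, one_mulVec, h, sub_self]
  have hd : (algebraMap ℝ (Matrix k k ℝ) μ - M).det = 0 :=
    (Matrix.exists_mulVec_eq_zero_iff).mp ⟨v, hv, h0⟩
  rw [hd] at hu
  exact zero_ne_one (isUnit_zero_iff.mp hu)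

lemma exists_eigvec {M : Matrix k k ℝ} (hM : M.IsHermitian) {μ : ℝ}
    (hμ : μ ∈ spectrum ℝ M) : ∃ v : k → ℝ, v ≠ 0 ∧ M *ᵥ v = μ • v := by
  rw [hM.spectrum_real_eq_range_eigenvalues] at hμ
  obtain ⟨i, rfl⟩ := hμ
  refine ⟨⇑(hM.eigenvectorBasis i), ?_, hM.mulVec_eigenvectorBasis i⟩
  have h0 := hM.eigenvectorBasis.orthonormal.ne_zero i
  intro hc
  exact h0 (by ext j; exact congrFun hc j)


lemma rayleigh_le {M : Matrix k k ℝ} (hM : M.IsHermitian) (x : k → ℝ) :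
    x ⬝ᵥ (M *ᵥ x) ≤ maxEig M * (x ⬝ᵥ x) := by
  cases isEmpty_or_nonempty k with
  | inl he => simp [dotProduct]
  | inr hne =>
  set U : Matrix k k ℝ := (hM.eigenvectorUnitary : Matrix k k ℝ) with hU
  have hUU : U * Uᵀ = 1 := by
    have := Matrix.mem_unitaryGroup_iff.mp hM.eigenvectorUnitary.2
    rwa [star_eq_conjTranspose, conjTranspose_eq_transpose_of_trivial] at this
  have hs : M = U * diagonal hM.eigenvalues * Uᵀ := by
    have := hM.spectral_theorem
    rwa [Unitary.conjStarAlgAut_apply, star_eq_conjTranspose, conjTranspose_eq_transpose_of_trivial,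
      show (RCLike.ofReal ∘ hM.eigenvalues : k → ℝ) = hM.eigenvalues from rfl] at this
  set y := Uᵀ *ᵥ x with hy
  have key : ∀ z : k → ℝ, x ⬝ᵥ (U *ᵥ z) = y ⬝ᵥ z := by
    intro z
    rw [dotProduct_mulVec, hy, mulVec_transpose]
  have h1 : x ⬝ᵥ (M *ᵥ x) = y ⬝ᵥ (diagonal hM.eigenvalues *ᵥ y) := by
    conv_lhs => rw [hs]
    rw [← mulVec_mulVec, ← mulVec_mulVec, key]
  have h3 : y ⬝ᵥ y = x ⬝ᵥ x := by
    have := key y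
    rw [mulVec_mulVec, hUU, one_mulVec] at this
    exact this.symm
  rw [h1, ← h3]
  have h2 : y ⬝ᵥ (diagonal hM.eigenvalues *ᵥ y) = ∑ i, hM.eigenvalues i * (y i * y i) := by
    simp only [dotProduct, mulVec_diagonal]
    exact Finset.sum_congr rfl fun i _ => by ring
  rw [h2, dotProduct, Finset.mul_sum]
  exact Finset.sum_le_sum fun i _ => mul_le_mul_of_nonneg_right
    (eig_le_maxEig hM (hM.eigenvalues_mem_spectrum_real i)) (mul_self_nonneg _)

lemma maxEig_nonneg {M : Matrix k k ℝ} (hM : M.PosSemidef) [Nonempty k] : 0 ≤ maxEig M :=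
  le_trans (hM.eigenvalues_nonneg (Classical.arbitrary k))
    (eig_le_maxEig hM.1 (hM.1.eigenvalues_mem_spectrum_real _))

lemma dotProduct_self_pos {v : k → ℝ} (hv : v ≠ 0) : 0 < v ⬝ᵥ v := by
  obtain ⟨i, hi⟩ := Function.ne_iff.mp hv
  exact Finset.sum_pos' (fun j _ => mul_self_nonneg _)
    ⟨i, Finset.mem_univ i, mul_self_pos.mpr hi⟩

lemma maxEig_mul_self_transpose_le [Nonempty l] (M : Matrix k l ℝ) :
    maxEig (M * Mᵀ) ≤ maxEig (Mᵀ * M) := by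
  have hXT : (Mᵀ * M).PosSemidef := by
    have := posSemidef_conjTranspose_mul_self M
    rwa [conjTranspose_eq_transpose_of_trivial] at this
  have hX : (M * Mᵀ).PosSemidef := by
    have := posSemidef_self_mul_conjTranspose M
    rwa [conjTranspose_eq_transpose_of_trivial] at this
  have h0 : 0 ≤ maxEig (Mᵀ * M) := maxEig_nonneg hXT
  refine Real.sSup_le (fun μ hμ => ?_) h0
  obtain ⟨v, hv, hev⟩ := exists_eigvec hX.1 hμ
  rcases eq_or_ne μ 0 with rfl | hμ0
  · exact h0
  · have hu : Mᵀ *ᵥ v ≠ 0 := by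
      intro h
      apply hv
      have : M *ᵥ (Mᵀ *ᵥ v) = μ • v := by rw [mulVec_mulVec, hev]
      rw [h, mulVec_zero] at this
      exact (smul_eq_zero.mp this.symm).resolve_left hμ0
    have heq : (Mᵀ * M) *ᵥ (Mᵀ *ᵥ v) = μ • (Mᵀ *ᵥ v) := by
      rw [← mulVec_mulVec,
        show M *ᵥ (Mᵀ *ᵥ v) = μ • v from by rw [mulVec_mulVec, hev], mulVec_smul]
    exact eig_le_maxEig hXT.1 (mem_spectrum_of_eigvec hu heq)

lemma maxEig_le_of_diff {M₁ M₂ : Matrix k k ℝ} [Nonempty k] (h1 : M₁.IsHermitian)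
    (h2 : M₂.PosSemidef) (hd : (M₂ - M₁).PosSemidef) : maxEig M₁ ≤ maxEig M₂ := by
  refine Real.sSup_le (fun μ hμ => ?_) (maxEig_nonneg h2)
  obtain ⟨v, hv, hev⟩ := exists_eigvec h1 hμ
  have hvv : 0 < v ⬝ᵥ v := dotProduct_self_pos hv
  have e1 : v ⬝ᵥ (M₁ *ᵥ v) = μ * (v ⬝ᵥ v) := by
    rw [hev, dotProduct_smul, smul_eq_mul]
  have e2 : v ⬝ᵥ (M₁ *ᵥ v) ≤ v ⬝ᵥ (M₂ *ᵥ v) := by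
    have := hd.dotProduct_mulVec_nonneg v
    rw [star_trivial, sub_mulVec, dotProduct_sub] at this
    linarith
  have e3 : v ⬝ᵥ (M₂ *ᵥ v) ≤ maxEig M₂ * (v ⬝ᵥ v) := rayleigh_le h2.1 v
  have : μ * (v ⬝ᵥ v) ≤ maxEig M₂ * (v ⬝ᵥ v) := by rw [← e1]; linarith
  exact le_of_mul_le_mul_right this hvv

end Stmt18Helpers

/-- For `L` positive definite, `R` of full row rank, and `W` diagonal positive definite, with
`X = W^{1/2}Rᵀ(RWRᵀ L RWRᵀ)⁻¹RW^{1/2}` and `X₁ = W^{-1/2}R† L⁻¹ (R†)ᵀ W^{-1/2}` where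
`R† = Rᵀ(RRᵀ)⁻¹`, we have `λ_max(X₁) ≥ λ_max(X)`. -/
theorem stmt18 {n m : ℕ} (L : Matrix (Fin (n - 1)) (Fin (n - 1)) ℝ) (hL : L.PosDef)
    (R : Matrix (Fin (n - 1)) (Fin m) ℝ)
    (hR : ∀ x : Fin (n - 1) → ℝ, R.vecMul x = 0 → x = 0)
    (w : Fin m → ℝ) (hw : ∀ i, 0 < w i) :
    let W : Matrix (Fin m) (Fin m) ℝ := Matrix.diagonal w
    let Ws : Matrix (Fin m) (Fin m) ℝ := Matrix.diagonal fun i => Real.sqrt (w i)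
    let Wis : Matrix (Fin m) (Fin m) ℝ := Matrix.diagonal fun i => (Real.sqrt (w i))⁻¹
    let Rdag : Matrix (Fin m) (Fin (n - 1)) ℝ := Rᵀ * (R * Rᵀ)⁻¹
    let X : Matrix (Fin m) (Fin m) ℝ :=
      Ws * Rᵀ * (R * W * Rᵀ * L * (R * W * Rᵀ))⁻¹ * (R * Ws)
    let X₁ : Matrix (Fin m) (Fin m) ℝ := Wis * Rdag * L⁻¹ * Rdagᵀ * Wis
    maxEig X ≤ maxEig X₁ := by
  intro W Ws Wis Rdag X X₁
  have hkey : ∀ (d : Fin m → ℝ), (∀ i, 0 < d i) → (R * Matrix.diagonal d * Rᵀ).PosDef := by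
    intro d hd
    refine Matrix.PosDef.of_dotProduct_mulVec_pos ?_ ?_
    · have := Matrix.isHermitian_mul_mul_conjTranspose R (Matrix.isHermitian_diagonal d)
      rwa [conjTranspose_eq_transpose_of_trivial] at this
    · intro x hx
      have hy : Rᵀ *ᵥ x ≠ 0 := fun h => hx (hR x (by rwa [← mulVec_transpose]))
      have hq : star x ⬝ᵥ (R * Matrix.diagonal d * Rᵀ) *ᵥ x
          = ∑ i, d i * ((Rᵀ *ᵥ x) i * (Rᵀ *ᵥ x) i) := by
        rw [star_trivial, ← mulVec_mulVec, ← mulVec_mulVec, dotProduct_mulVec,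
          ← mulVec_transpose]
        simp only [dotProduct, mulVec_diagonal]
        exact Finset.sum_congr rfl fun i _ => by ring
      rw [hq]
      obtain ⟨i, hi⟩ := Function.ne_iff.mp hy
      exact Finset.sum_pos' (fun j _ => mul_nonneg (hd j).le (mul_self_nonneg _))
        ⟨i, Finset.mem_univ i, mul_pos (hd i) (mul_self_pos.mpr hi)⟩
  rcases isEmpty_or_nonempty (Fin (n - 1)) with he | hne
  · have hX : X = 0 := by
      show Ws * Rᵀ * (R * W * Rᵀ * L * (R * W * Rᵀ))⁻¹ * (R * Ws) = 0
      ext i j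
      simp [Matrix.mul_apply]
    have hX₁ : X₁ = 0 := by
      show Wis * Rdag * L⁻¹ * Rdagᵀ * Wis = 0
      have h2 : Wis * Rdag * L⁻¹ * Rdagᵀ = 0 := by ext i j; simp [Matrix.mul_apply]
      rw [h2, Matrix.zero_mul]
    rw [hX, hX₁]
  · have hm : Nonempty (Fin m) := by
      rcases isEmpty_or_nonempty (Fin m) with h | h
      · exfalso
        have h1 := hR (fun _ => 1) (funext fun i => isEmptyElim i)
        exact one_ne_zero (congrFun h1 (Classical.arbitrary _))
      · exact h
    have hG : (R * W * Rᵀ).PosDef := hkey w hw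
    have hH : (R * Rᵀ).PosDef := by
      have h1 := hkey (fun _ => 1) (fun _ => one_pos)
      rwa [diagonal_one, Matrix.mul_one] at h1
    have hGd : IsUnit (R * W * Rᵀ).det := isUnit_iff_ne_zero.mpr hG.det_pos.ne'
    have hHd : IsUnit (R * Rᵀ).det := isUnit_iff_ne_zero.mpr hH.det_pos.ne'
    set G := R * W * Rᵀ with hGdef
    set H := R * Rᵀ with hHdef
    have hLi : (L⁻¹).PosDef := hL.inv
    open scoped MatrixOrder in set K := CFC.sqrt (L⁻¹) with hKdef
    have hKpsd : K.PosSemidef := open scoped MatrixOrder in (CFC.sqrt_nonneg (L⁻¹)).posSemidef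
    have hKK : K * K = L⁻¹ := open scoped MatrixOrder in CFC.sqrt_mul_sqrt_self (L⁻¹) hLi.posSemidef.nonneg
    have hKT : Kᵀ = K := by
      have := hKpsd.1.eq
      rwa [conjTranspose_eq_transpose_of_trivial] at this
    have hGT : Gᵀ = G := by
      have := hG.1.eq
      rwa [conjTranspose_eq_transpose_of_trivial] at this
    have hHT : Hᵀ = H := by
      have := hH.1.eq
      rwa [conjTranspose_eq_transpose_of_trivial] at this
    have hGiT : (G⁻¹)ᵀ = G⁻¹ := by rw [transpose_nonsing_inv, hGT]
    have hHiT : (H⁻¹)ᵀ = H⁻¹ := by rw [transpose_nonsing_inv, hHT]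
    have hWsT : Wsᵀ = Ws := diagonal_transpose _
    have hWisT : Wisᵀ = Wis := diagonal_transpose _
    have hWsWs : Ws * Ws = W := by
      show Matrix.diagonal (fun i => Real.sqrt (w i)) * Matrix.diagonal (fun i => Real.sqrt (w i))
        = Matrix.diagonal w
      rw [diagonal_mul_diagonal,
        show (fun i => Real.sqrt (w i) * Real.sqrt (w i)) = w from
          funext fun i => Real.mul_self_sqrt (hw i).le]
    have hWsWis : Ws * Wis = 1 := by
      show Matrix.diagonal (fun i => Real.sqrt (w i))
          * Matrix.diagonal (fun i => (Real.sqrt (w i))⁻¹) = 1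
      rw [diagonal_mul_diagonal,
        show (fun i => Real.sqrt (w i) * (Real.sqrt (w i))⁻¹) = (fun _ => (1:ℝ)) from
          funext fun i => mul_inv_cancel₀ (Real.sqrt_ne_zero'.mpr (hw i)), diagonal_one]
    set A := G⁻¹ * (R * Ws) with hAdef
    set B := H⁻¹ * (R * Wis) with hBdef
    have hAT : Aᵀ = Ws * Rᵀ * G⁻¹ := by
      rw [hAdef, transpose_mul, transpose_mul, hWsT, hGiT]
    have hBT : Bᵀ = Wis * Rᵀ * H⁻¹ := by
      rw [hBdef, transpose_mul, transpose_mul, hWisT, hHiT]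
    have hGLGinv : (G * L * G)⁻¹ = G⁻¹ * L⁻¹ * G⁻¹ := by
      rw [Matrix.mul_inv_rev, Matrix.mul_inv_rev, ← Matrix.mul_assoc]
    have hXeq : X = Aᵀ * L⁻¹ * A := by
      show Ws * Rᵀ * (G * L * G)⁻¹ * (R * Ws) = Aᵀ * L⁻¹ * A
      rw [hGLGinv, hAT, hAdef]
      simp only [Matrix.mul_assoc]
    have hX1eq : X₁ = Bᵀ * L⁻¹ * B := by
      show Wis * (Rᵀ * H⁻¹) * L⁻¹ * (Rᵀ * H⁻¹)ᵀ * Wis = Bᵀ * L⁻¹ * B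
      rw [transpose_mul, transpose_transpose, hHiT, hBT, hBdef]
      simp only [Matrix.mul_assoc]
    have hRWR : R * Ws * (Ws * Rᵀ) = G := by
      rw [← Matrix.mul_assoc, Matrix.mul_assoc R Ws Ws, hWsWs, hGdef]
    have hRWisR : R * Ws * (Wis * Rᵀ) = H := by
      rw [← Matrix.mul_assoc, Matrix.mul_assoc R Ws Wis, hWsWis, Matrix.mul_one, hHdef]
    have hAAT : A * Aᵀ = G⁻¹ := by
      rw [hAT, hAdef, Matrix.mul_assoc, ← Matrix.mul_assoc (R * Ws) (Ws * Rᵀ) G⁻¹, hRWR,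
        Matrix.mul_nonsing_inv _ hGd, Matrix.mul_one]
    have hABT : A * Bᵀ = G⁻¹ := by
      rw [hBT, hAdef, Matrix.mul_assoc, ← Matrix.mul_assoc (R * Ws) (Wis * Rᵀ) H⁻¹, hRWisR,
        Matrix.mul_nonsing_inv _ hHd, Matrix.mul_one]
    have hBAT : B * Aᵀ = G⁻¹ := by
      have := congrArg Matrix.transpose hABT
      rwa [transpose_mul A Bᵀ, transpose_transpose B, hGiT] at this
    set D := B - A with hDdef
    have hDDT : D * Dᵀ = B * Bᵀ - A * Aᵀ := by
      rw [hDdef, transpose_sub, Matrix.sub_mul, Matrix.mul_sub, Matrix.mul_sub,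
        hABT, hBAT, hAAT]
      abel
    have hconj : ∀ (P Q : Matrix (Fin (n - 1)) (Fin m) ℝ),
        (K * P) * (K * Q)ᵀ = K * (P * Qᵀ) * K := by
      intro P Q
      rw [transpose_mul K Q, hKT, Matrix.mul_assoc K P (Qᵀ * K), ← Matrix.mul_assoc P Qᵀ K,
        ← Matrix.mul_assoc K (P * Qᵀ) K]
    have e1 : (Aᵀ * K) * (Aᵀ * K)ᵀ = X := by
      rw [hXeq, transpose_mul Aᵀ K, transpose_transpose A, hKT, Matrix.mul_assoc Aᵀ K (K * A),
        ← Matrix.mul_assoc K K A, hKK, ← Matrix.mul_assoc Aᵀ L⁻¹ A]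
    have e2 : (Aᵀ * K)ᵀ * (Aᵀ * K) = K * (A * Aᵀ) * K := by
      rw [transpose_mul Aᵀ K, transpose_transpose A, hKT, Matrix.mul_assoc K A (Aᵀ * K),
        ← Matrix.mul_assoc A Aᵀ K, ← Matrix.mul_assoc K (A * Aᵀ) K]
    have e4 : (K * B)ᵀ * (K * B) = X₁ := by
      rw [hX1eq, transpose_mul K B, hKT, Matrix.mul_assoc Bᵀ K (K * B),
        ← Matrix.mul_assoc K K B, hKK, ← Matrix.mul_assoc Bᵀ L⁻¹ B]
    have hPSD1 : ((Aᵀ * K)ᵀ * (Aᵀ * K)).PosSemidef := by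
      have := posSemidef_conjTranspose_mul_self (Aᵀ * K)
      rwa [conjTranspose_eq_transpose_of_trivial] at this
    have hPSD2 : ((K * B) * (K * B)ᵀ).PosSemidef := by
      have := posSemidef_self_mul_conjTranspose (K * B)
      rwa [conjTranspose_eq_transpose_of_trivial] at this
    have hPSD3 : ((K * D) * (K * D)ᵀ).PosSemidef := by
      have := posSemidef_self_mul_conjTranspose (K * D)
      rwa [conjTranspose_eq_transpose_of_trivial] at this
    have hdiff : (K * B) * (K * B)ᵀ - (Aᵀ * K)ᵀ * (Aᵀ * K) = (K * D) * (K * D)ᵀ := by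
      rw [hconj B B, e2, hconj D D, hDDT, Matrix.mul_sub, Matrix.sub_mul]
    calc maxEig X = maxEig ((Aᵀ * K) * (Aᵀ * K)ᵀ) := by rw [e1]
      _ ≤ maxEig ((Aᵀ * K)ᵀ * (Aᵀ * K)) := maxEig_mul_self_transpose_le _
      _ ≤ maxEig ((K * B) * (K * B)ᵀ) :=
          maxEig_le_of_diff hPSD1.1 hPSD2 (by rw [hdiff]; exact hPSD3)
      _ ≤ maxEig ((K * B)ᵀ * (K * B)) := maxEig_mul_self_transpose_le _
      _ = maxEig X₁ := by rw [e4]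
end
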